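/- Splitting identity for exponentials of commuting nonpositive reals: for a, b ≤ 0 and t ≥ 0, e^{t(a+b)} = e^{ta} e^{tb}, and moreover φ₁(t(a+b)) − φ₁(ta)φ₁(tb) = ∫₀¹∫₀¹∫_η^ξ t e^{t(1−η)b} a e^{t(1−σ)a} dσ dη dξ, where the inner integral is oriented from η to ξ. -/

import Mathlib

/-- `φ₁(z) = ∫₀¹ e^{(1−ξ)z} dξ`. -/
noncomputable def phi1I (z : ℝ) : ℝ := ∫ ξ in (0:ℝ)..1, Real.exp ((1 - ξ) * z)

lemma inner_int (t a η ξ : ℝ) :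
    ∫ σ in η..ξ, t * a * Real.exp (t * (1 - σ) * a)
      = Real.exp (t * (1 - η) * a) - Real.exp (t * (1 - ξ) * a) := by
  have h : ∀ σ : ℝ, HasDerivAt (fun σ : ℝ => -Real.exp (t * (1 - σ) * a))
      (t * a * Real.exp (t * (1 - σ) * a)) σ := by
    intro σ
    have h1 : HasDerivAt (fun σ : ℝ => t * (1 - σ) * a) (-(t * a)) σ := by
      have : HasDerivAt (fun σ : ℝ => t * (1 - σ) * a) (t * -1 * a) σ :=
        (((hasDerivAt_id σ).const_sub 1).const_mul t).mul_const a
      convert this using 1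
      ring
    have h2 := (Real.hasDerivAt_exp (t * (1 - σ) * a)).comp σ h1
    have h3 := h2.neg
    exact h3.congr_deriv (by ring)
  have hint : IntervalIntegrable (fun σ : ℝ => t * a * Real.exp (t * (1 - σ) * a))
      MeasureTheory.volume η ξ := by
    apply Continuous.intervalIntegrable
    fun_prop
  have := intervalIntegral.integral_eq_sub_of_hasDerivAt (fun σ _ => h σ) hint
  rw [this]
  ring

theorem splitting_identity_exponentials (a b t : ℝ) (ha : a ≤ 0) (hb : b ≤ 0)
    (ht : 0 ≤ t) :
    Real.exp (t * (a + b)) = Real.exp (t * a) * Real.exp (t * b) ∧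
    phi1I (t * (a + b)) - phi1I (t * a) * phi1I (t * b) =
      ∫ ξ in (0:ℝ)..1, ∫ η in (0:ℝ)..1, ∫ σ in η..ξ,
        t * Real.exp (t * (1 - η) * b) * a * Real.exp (t * (1 - σ) * a) := by
  constructor
  · rw [mul_add, Real.exp_add]
  -- rewrite the triple integral
  have hη : ∀ ξ : ℝ, (∫ η in (0:ℝ)..1, ∫ σ in η..ξ,
        t * Real.exp (t * (1 - η) * b) * a * Real.exp (t * (1 - σ) * a))
      = phi1I (t * (a + b)) - Real.exp (t * (1 - ξ) * a) * phi1I (t * b) := by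
    intro ξ
    have hstep : ∀ η : ℝ, (∫ σ in η..ξ,
          t * Real.exp (t * (1 - η) * b) * a * Real.exp (t * (1 - σ) * a))
        = Real.exp ((1 - η) * (t * (a + b)))
          - Real.exp (t * (1 - ξ) * a) * Real.exp ((1 - η) * (t * b)) := by
      intro η
      have : (∫ σ in η..ξ,
          t * Real.exp (t * (1 - η) * b) * a * Real.exp (t * (1 - σ) * a))
          = Real.exp (t * (1 - η) * b) *
            ∫ σ in η..ξ, t * a * Real.exp (t * (1 - σ) * a) := by
        rw [← intervalIntegral.integral_const_mul]
        congr 1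
        ext σ
        ring
      rw [this, inner_int, mul_sub, ← Real.exp_add, ← Real.exp_add, ← Real.exp_add]
      congr 1 <;> · congr 1; ring
    rw [intervalIntegral.integral_congr (g := fun η =>
      Real.exp ((1 - η) * (t * (a + b)))
        - Real.exp (t * (1 - ξ) * a) * Real.exp ((1 - η) * (t * b)))
      (fun η _ => hstep η)]
    rw [intervalIntegral.integral_sub (by apply Continuous.intervalIntegrable; fun_prop)
      (by apply Continuous.intervalIntegrable; fun_prop),
      intervalIntegral.integral_const_mul]
    rfl
  rw [intervalIntegral.integral_congr (g := fun ξ =>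
      phi1I (t * (a + b)) - Real.exp (t * (1 - ξ) * a) * phi1I (t * b))
    (fun ξ _ => hη ξ)]
  rw [intervalIntegral.integral_sub (by apply intervalIntegrable_const)
    (by apply Continuous.intervalIntegrable; fun_prop),
    intervalIntegral.integral_const, intervalIntegral.integral_mul_const]
  have : (∫ ξ in (0:ℝ)..1, Real.exp (t * (1 - ξ) * a)) = phi1I (t * a) := by
    unfold phi1I
    congr 1
    ext ξ
    ring_nf
  rw [this]
  simp
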